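/- Let α₀ > 0 and β > 0 be constants and set A₀ := α₀/β. Suppose H : [0,∞) → ℝ is differentiable, H(t) ≥ 0 for all t ≥ 0, and (1/2)·H'(t) ≤ α₀·H(t) − β·H(t)² for all t ≥ 0. Then for every T > 0 the time average satisfies ⟨H⟩_T ≤ A₀ + √(H(0)/(2βT)). In particular, limsup_{T→∞} ⟨H⟩_T ≤ A₀. -/

import Mathlib

open MeasureTheory intervalIntegral Filter

/-- Under the energy differential inequality
`(1/2)·H' ≤ α₀·H − β·H²` with `H ≥ 0`, for every `T > 0` the time average
`⟨H⟩_T = (1/T)∫₀ᵀ H` satisfies `⟨H⟩_T ≤ A₀ + √(H(0)/(2βT))` where `A₀ = α₀/β`;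
in particular `limsup_{T→∞} ⟨H⟩_T ≤ A₀`. -/
theorem toner_tu_time_averaged_energy (α₀ β : ℝ) (hα : 0 < α₀) (hβ : 0 < β)
    (H H' : ℝ → ℝ)
    (hderiv : ∀ t ≥ (0:ℝ), HasDerivAt H (H' t) t)
    (hnonneg : ∀ t ≥ (0:ℝ), 0 ≤ H t)
    (hineq : ∀ t ≥ (0:ℝ), (1/2) * H' t ≤ α₀ * H t - β * (H t)^2) :
    (∀ T > (0:ℝ), (1/T) * ∫ τ in (0:ℝ)..T, H τ ≤
        α₀ / β + Real.sqrt (H 0 / (2 * β * T))) ∧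
    Filter.limsup (fun T => (1/T) * ∫ τ in (0:ℝ)..T, H τ) Filter.atTop ≤ α₀ / β := by
  have hHat : ∀ t ≥ (0:ℝ), ContinuousAt H t := fun t ht => (hderiv t ht).continuousAt
  set g : ℝ → ℝ := fun t => β * (H t)^2 - α₀ * H t with hg_def
  have hgat : ∀ t ≥ (0:ℝ), ContinuousAt g t := by
    intro t ht
    exact ((continuousAt_const.mul ((hHat t ht).pow 2)).sub
      (continuousAt_const.mul (hHat t ht)))
  have hgIoi : ContinuousOn g (Set.Ioi 0) := fun t ht =>
    (hgat t (le_of_lt ht)).continuousWithinAt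
  -- Main pointwise bound
  have key : ∀ T > (0:ℝ), (1/T) * ∫ τ in (0:ℝ)..T, H τ ≤
      α₀ / β + Real.sqrt (H 0 / (2 * β * T)) := by
    intro T hT
    have huIcc : Set.uIcc (0:ℝ) T = Set.Icc 0 T := Set.uIcc_of_le hT.le
    have hHc : ContinuousOn H (Set.Icc 0 T) := fun t ht =>
      (hHat t ht.1).continuousWithinAt
    have hgc : ContinuousOn g (Set.Icc 0 T) := fun t ht =>
      (hgat t ht.1).continuousWithinAt
    have hintH : IntervalIntegrable H volume 0 T :=
      (hHc.mono (by rw [huIcc])).intervalIntegrable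
    have hintH2 : IntervalIntegrable (fun τ => (H τ)^2) volume 0 T :=
      (((hHc.pow 2).mono (by rw [huIcc]))).intervalIntegrable
    have hintg : IntervalIntegrable g volume 0 T :=
      ((hgc.mono (by rw [huIcc]))).intervalIntegrable
    -- F is the "energy balance" function
    set F : ℝ → ℝ := fun t => (1/2) * H t + ∫ τ in (0:ℝ)..t, g τ with hF_def
    have hFc : ContinuousOn F (Set.Icc 0 T) := by
      apply ContinuousOn.add (continuousOn_const.mul hHc)
      have := intervalIntegral.continuousOn_primitive_interval
        (f := g) (μ := volume) (a := (0:ℝ)) (b := T)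
        (by rw [huIcc]; exact (hgc.integrableOn_compact isCompact_Icc))
      rwa [huIcc] at this
    have hF' : ∀ t ∈ Set.Ioo (0:ℝ) T, HasDerivAt F ((1/2) * H' t + g t) t := by
      intro t ht
      have h1 : HasDerivAt (fun s => (1/2) * H s) ((1/2) * H' t) t :=
        (hderiv t ht.1.le).const_mul _
      have hintg' : IntervalIntegrable g volume 0 t := by
        apply hintg.mono_set
        rw [Set.uIcc_of_le ht.1.le, huIcc]
        exact Set.Icc_subset_Icc le_rfl ht.2.le
      have h2 : HasDerivAt (fun s => ∫ τ in (0:ℝ)..s, g τ) (g t) t :=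
        intervalIntegral.integral_hasDerivAt_right hintg'
          (hgIoi.stronglyMeasurableAtFilter isOpen_Ioi t ht.1)
          (hgat t ht.1.le)
      exact h1.add h2
    have hanti : AntitoneOn F (Set.Icc 0 T) := by
      apply antitoneOn_of_deriv_nonpos (convex_Icc 0 T) hFc
      · intro t ht
        rw [interior_Icc] at ht
        exact (hF' t ht).differentiableAt.differentiableWithinAt
      · intro t ht
        rw [interior_Icc] at ht
        rw [(hF' t ht).deriv]
        have := hineq t ht.1.le
        simp only [hg_def]
        linarith
    have hFTF0 : F T ≤ F 0 := hanti (Set.left_mem_Icc.2 hT.le)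
      (Set.right_mem_Icc.2 hT.le) hT.le
    have hF0 : F 0 = (1/2) * H 0 := by simp [hF_def]
    have hsplit : (∫ τ in (0:ℝ)..T, g τ) =
        β * (∫ τ in (0:ℝ)..T, (H τ)^2) - α₀ * (∫ τ in (0:ℝ)..T, H τ) := by
      rw [hg_def]
      rw [intervalIntegral.integral_sub (hintH2.const_mul β) (hintH.const_mul α₀),
        intervalIntegral.integral_const_mul, intervalIntegral.integral_const_mul]
    have hHT : 0 ≤ H T := hnonneg T hT.le
    have hbal : β * (∫ τ in (0:ℝ)..T, (H τ)^2) ≤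
        α₀ * (∫ τ in (0:ℝ)..T, H τ) + (1/2) * H 0 := by
      have := hFTF0
      rw [hF0, hF_def] at this
      simp only at this
      rw [hsplit] at this
      linarith
    -- Cauchy–Schwarz via nonnegativity of ∫ (H - x)²
    set I : ℝ := ∫ τ in (0:ℝ)..T, H τ with hI_def
    set x : ℝ := I / T with hx_def
    have hInn : 0 ≤ I :=
      intervalIntegral.integral_nonneg hT.le (fun u hu => hnonneg u hu.1)
    have hxnn : 0 ≤ x := div_nonneg hInn hT.le
    have hcs0 : (0:ℝ) ≤ ∫ τ in (0:ℝ)..T, (H τ - x)^2 :=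
      intervalIntegral.integral_nonneg hT.le (fun u _ => sq_nonneg _)
    have hcs1 : (∫ τ in (0:ℝ)..T, (H τ - x)^2) =
        (∫ τ in (0:ℝ)..T, (H τ)^2) - 2*x*I + x^2*T := by
      have hcong : ∀ τ, (H τ - x)^2 = (H τ)^2 - (2*x) * H τ + x^2 := by
        intro τ; ring
      simp_rw [hcong]
      rw [intervalIntegral.integral_add (hintH2.sub (hintH.const_mul (2*x)))
        intervalIntegrable_const,
        intervalIntegral.integral_sub hintH2 (hintH.const_mul (2*x)),
        intervalIntegral.integral_const_mul, intervalIntegral.integral_const]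
      simp only [smul_eq_mul, hx_def]
      ring
    have hI2 : x^2 * T ≤ ∫ τ in (0:ℝ)..T, (H τ)^2 := by
      have hIx : I = x * T := by rw [hx_def]; field_simp
      nlinarith [hcs0, hcs1]
    -- combine: β T x² ≤ α₀ T x + H0/2
    have hquad : x^2 ≤ (α₀/β) * x + H 0 / (2 * β * T) := by
      have hIx : I = x * T := by rw [hx_def]; field_simp
      have h1 : β * (x^2 * T) ≤ α₀ * (x * T) + (1/2) * H 0 := by
        nlinarith [hbal, hI2]
      have hβT : (0:ℝ) < β * T := by positivity
      have h2 : x^2 ≤ (α₀ * (x * T) + (1/2) * H 0) / (β * T) := by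
        rw [le_div_iff₀ hβT]; nlinarith
      have heq : (α₀ * (x * T) + (1/2) * H 0) / (β * T)
          = α₀/β * x + H 0 / (2 * β * T) := by
        field_simp
      rw [heq] at h2; exact h2
    set c : ℝ := H 0 / (2 * β * T) with hc_def
    have hcnn : 0 ≤ c := by
      apply div_nonneg (hnonneg 0 le_rfl); positivity
    have hsq : Real.sqrt c ^ 2 = c := Real.sq_sqrt hcnn
    have hsnn : 0 ≤ Real.sqrt c := Real.sqrt_nonneg c
    have hAnn : 0 < α₀/β := by positivity
    have hfin : x ≤ α₀/β + Real.sqrt c := by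
      by_contra hcon
      push_neg at hcon
      nlinarith [hquad, hsq, hsnn, hAnn, hcon]
    have : (1/T) * I = x := by rw [hx_def]; ring
    rw [hI_def] at this
    rw [this]
    exact hfin
  refine ⟨key, ?_⟩
  -- limsup part
  set f : ℝ → ℝ := fun T => (1/T) * ∫ τ in (0:ℝ)..T, H τ with hf_def
  set G : ℝ → ℝ := fun T => α₀/β + Real.sqrt (H 0 / (2 * β * T)) with hG_def
  have hev : ∀ᶠ T in atTop, f T ≤ G T := by
    filter_upwards [eventually_gt_atTop (0:ℝ)] with T hT
    exact key T hT
  have htend : Tendsto G atTop (nhds (α₀/β)) := by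
    have h1 : Tendsto (fun T : ℝ => H 0 / (2 * β * T)) atTop (nhds 0) := by
      have : (fun T : ℝ => H 0 / (2 * β * T)) = fun T => (H 0 / (2*β)) * T⁻¹ := by
        funext T; rw [← div_div, div_eq_mul_inv]
      rw [this]
      simpa using tendsto_inv_atTop_zero.const_mul (H 0 / (2*β))
    have h2 : Tendsto (fun T : ℝ => Real.sqrt (H 0 / (2 * β * T))) atTop (nhds 0) := by
      have := (Real.continuous_sqrt.tendsto 0).comp h1
      rwa [Real.sqrt_zero] at this
    have := h2.const_add (α₀/β)
    simpa [hG_def] using this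
  have hfnn : ∀ᶠ T in atTop, (0:ℝ) ≤ f T := by
    filter_upwards [eventually_gt_atTop (0:ℝ)] with T hT
    have : 0 ≤ ∫ τ in (0:ℝ)..T, H τ :=
      intervalIntegral.integral_nonneg hT.le (fun u hu => hnonneg u hu.1)
    have h1 : 0 ≤ 1/T := by positivity
    exact mul_nonneg h1 this
  have hcb : IsCoboundedUnder (· ≤ ·) atTop f :=
    Filter.isCoboundedUnder_le_of_eventually_le atTop hfnn
  have hbd : IsBoundedUnder (· ≤ ·) atTop G := htend.isBoundedUnder_le
  calc Filter.limsup f atTop ≤ Filter.limsup G atTop :=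
        Filter.limsup_le_limsup hev hcb hbd
    _ = α₀/β := htend.limsup_eq
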